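/- (Intersection lemma of Chung, Frankl, Graham, Shearer.) Let U be a finite set and P₁,…,P_m subsets of U such that every element of U lies in at least δ of the Pℓ (δ ≥ 1). Let F be a family of subsets of U and define the projections Fℓ = { F ∩ Pℓ : F ∈ F }. Then |F|^δ ≤ ∏_{ℓ=1}^m |Fℓ|. -/

import Mathlib

open Finset NNReal


lemma cfgs_mahler {ι : Type*} (s : Finset ι) (hs : 0 < s.card) (x y : ι → ℝ≥0) :
    (∏ i ∈ s, x i) ^ ((s.card : ℝ)⁻¹) + (∏ i ∈ s, y i) ^ ((s.card : ℝ)⁻¹)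
      ≤ (∏ i ∈ s, (x i + y i)) ^ ((s.card : ℝ)⁻¹) := by
  have hc : ((s.card : ℝ)⁻¹) ≠ 0 := by positivity
  by_cases h0 : ∃ i ∈ s, x i + y i = 0
  · obtain ⟨i, hi, hxy⟩ := h0
    have hx : x i = 0 := by
      have := add_eq_zero.mp hxy; exact this.1
    have hy : y i = 0 := (add_eq_zero.mp hxy).2
    have hX : ∏ i ∈ s, x i = 0 := Finset.prod_eq_zero hi hx
    have hY : ∏ i ∈ s, y i = 0 := Finset.prod_eq_zero hi hy
    rw [hX, hY, NNReal.zero_rpow hc]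
    simp
  · push_neg at h0
    set n := s.card with hn
    set Z := ∏ i ∈ s, (x i + y i) with hZ
    have hfac : ∀ (f : ι → ℝ≥0), (∀ i ∈ s, f i ≤ x i + y i) →
        ∏ i ∈ s, f i = (∏ i ∈ s, f i / (x i + y i)) * Z := by
      intro f hf
      rw [hZ, ← Finset.prod_mul_distrib]
      refine Finset.prod_congr rfl fun i hi => ?_
      rw [div_mul_cancel₀]
      exact h0 i hi
    have key : ∀ (f : ι → ℝ≥0),
        ∏ i ∈ s, (f i / (x i + y i)) ^ ((n : ℝ)⁻¹)
          ≤ ∑ i ∈ s, (n : ℝ≥0)⁻¹ * (f i / (x i + y i)) := by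
      intro f
      have := NNReal.geom_mean_le_arith_mean_weighted s (fun _ => (n : ℝ≥0)⁻¹)
        (fun i => f i / (x i + y i)) (by
          simp [Finset.sum_const, hn]
          rw [mul_inv_cancel₀]
          exact_mod_cast hs.ne')
      simpa using this
    have hsum : (∑ i ∈ s, (n : ℝ≥0)⁻¹ * (x i / (x i + y i)))
        + (∑ i ∈ s, (n : ℝ≥0)⁻¹ * (y i / (x i + y i))) = 1 := by
      rw [← Finset.sum_add_distrib]
      have : ∀ i ∈ s, (n : ℝ≥0)⁻¹ * (x i / (x i + y i)) + (n : ℝ≥0)⁻¹ * (y i / (x i + y i))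
          = (n : ℝ≥0)⁻¹ := by
        intro i hi
        rw [← mul_add, ← add_div, div_self (h0 i hi), mul_one]
      rw [Finset.sum_congr rfl this]
      simp [hn]
      rw [mul_inv_cancel₀]
      exact_mod_cast hs.ne'
    have hx' : (∏ i ∈ s, x i) ^ ((n : ℝ)⁻¹)
        = (∏ i ∈ s, (x i / (x i + y i)) ^ ((n : ℝ)⁻¹)) * Z ^ ((n : ℝ)⁻¹) := by
      rw [NNReal.finset_prod_rpow, ← NNReal.mul_rpow, ← hfac x (fun i _ => le_self_add)]
    have hy' : (∏ i ∈ s, y i) ^ ((n : ℝ)⁻¹)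
        = (∏ i ∈ s, (y i / (x i + y i)) ^ ((n : ℝ)⁻¹)) * Z ^ ((n : ℝ)⁻¹) := by
      rw [NNReal.finset_prod_rpow, ← NNReal.mul_rpow, ← hfac y (fun i _ => le_add_self)]
    calc (∏ i ∈ s, x i) ^ ((n : ℝ)⁻¹) + (∏ i ∈ s, y i) ^ ((n : ℝ)⁻¹)
        = ((∏ i ∈ s, (x i / (x i + y i)) ^ ((n : ℝ)⁻¹))
            + (∏ i ∈ s, (y i / (x i + y i)) ^ ((n : ℝ)⁻¹))) * Z ^ ((n : ℝ)⁻¹) := by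
          rw [hx', hy', add_mul]
      _ ≤ ((∑ i ∈ s, (n : ℝ≥0)⁻¹ * (x i / (x i + y i)))
            + (∑ i ∈ s, (n : ℝ≥0)⁻¹ * (y i / (x i + y i)))) * Z ^ ((n : ℝ)⁻¹) := by
          gcongr
          · exact key x
          · exact key y
      _ = Z ^ ((n : ℝ)⁻¹) := by rw [hsum, one_mul]

lemma cfgs_nat_mink {ι : Type*} (s : Finset ι) {δ : ℕ} (hδ : 0 < δ) (hcard : s.card = δ)
    (x y : ι → ℕ) (p q M : ℕ)
    (hp : p ^ δ ≤ (∏ i ∈ s, x i) * M) (hq : q ^ δ ≤ (∏ i ∈ s, y i) * M) :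
    (p + q) ^ δ ≤ (∏ i ∈ s, (x i + y i)) * M := by
  have hδR : (δ : ℝ) ≠ 0 := by positivity
  set c : ℝ := (δ : ℝ)⁻¹ with hc
  -- move to ℝ≥0
  have cast_le : ∀ a b : ℕ, (a : ℝ≥0) ≤ b → a ≤ b := fun a b h => by exact_mod_cast h
  refine cast_le _ _ ?_
  push_cast
  have root : ∀ (a : ℕ) (B : ℝ≥0), (a : ℝ≥0) ^ δ ≤ B → (a : ℝ≥0) ≤ B ^ c := by
    intro a B h
    have : ((a : ℝ≥0) ^ δ) ^ c ≤ B ^ c := NNReal.rpow_le_rpow h (by positivity)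
    rwa [← NNReal.rpow_natCast (a : ℝ≥0) δ, ← NNReal.rpow_mul,
      mul_inv_cancel₀ hδR, NNReal.rpow_one] at this
  have hp' : (p : ℝ≥0) ≤ ((∏ i ∈ s, (x i : ℝ≥0)) * M) ^ c := by
    refine root p _ ?_
    calc ((p : ℝ≥0)) ^ δ = ((p ^ δ : ℕ) : ℝ≥0) := by push_cast; ring
      _ ≤ (((∏ i ∈ s, x i) * M : ℕ) : ℝ≥0) := by exact_mod_cast hp
      _ = (∏ i ∈ s, (x i : ℝ≥0)) * M := by push_cast; ring
  have hq' : (q : ℝ≥0) ≤ ((∏ i ∈ s, (y i : ℝ≥0)) * M) ^ c := by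
    refine root q _ ?_
    calc ((q : ℝ≥0)) ^ δ = ((q ^ δ : ℕ) : ℝ≥0) := by push_cast; ring
      _ ≤ (((∏ i ∈ s, y i) * M : ℕ) : ℝ≥0) := by exact_mod_cast hq
      _ = (∏ i ∈ s, (y i : ℝ≥0)) * M := by push_cast; ring
  have hm : (∏ i ∈ s, (x i : ℝ≥0)) ^ c + (∏ i ∈ s, (y i : ℝ≥0)) ^ c
      ≤ (∏ i ∈ s, ((x i : ℝ≥0) + y i)) ^ c := by
    have := cfgs_mahler s (by omega) (fun i => (x i : ℝ≥0)) (fun i => (y i : ℝ≥0))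
    rwa [hcard] at this
  have hsum : (p : ℝ≥0) + q ≤ ((∏ i ∈ s, ((x i : ℝ≥0) + y i)) * M) ^ c := by
    calc (p : ℝ≥0) + q ≤ ((∏ i ∈ s, (x i : ℝ≥0)) * M) ^ c
          + ((∏ i ∈ s, (y i : ℝ≥0)) * M) ^ c := add_le_add hp' hq'
      _ = ((∏ i ∈ s, (x i : ℝ≥0)) ^ c + (∏ i ∈ s, (y i : ℝ≥0)) ^ c) * M ^ c := by
          rw [NNReal.mul_rpow, NNReal.mul_rpow, add_mul]
      _ ≤ (∏ i ∈ s, ((x i : ℝ≥0) + y i)) ^ c * M ^ c := by gcongr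
      _ = ((∏ i ∈ s, ((x i : ℝ≥0) + y i)) * M) ^ c := (NNReal.mul_rpow).symm
  calc ((p : ℝ≥0) + q) ^ δ ≤ (((∏ i ∈ s, ((x i : ℝ≥0) + y i)) * M) ^ c) ^ δ := by
        exact pow_le_pow_left₀ (by positivity) hsum δ
    _ = (∏ i ∈ s, ((x i : ℝ≥0) + y i)) * M := by
        rw [← NNReal.rpow_natCast (_ ^ c) δ, ← NNReal.rpow_mul, hc,
          inv_mul_cancel₀ hδR, NNReal.rpow_one]

lemma cfgs_combine {m δ : ℕ} (hδ : 0 < δ) (L : Finset (Fin m)) (hL : δ ≤ L.card)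
    (x y z : Fin m → ℕ) (hx : ∀ ℓ, x ℓ ≤ z ℓ) (hy : ∀ ℓ ∉ L, y ℓ ≤ z ℓ)
    (hxy : ∀ ℓ ∈ L, x ℓ + y ℓ ≤ z ℓ) (p q : ℕ)
    (hp : p ^ δ ≤ ∏ ℓ, x ℓ) (hq : q ^ δ ≤ ∏ ℓ, y ℓ) :
    (p + q) ^ δ ≤ ∏ ℓ, z ℓ := by
  obtain ⟨L', hL'sub, hL'card⟩ := Finset.exists_subset_card_eq hL
  have hy' : ∀ ℓ, y ℓ ≤ z ℓ := by
    intro ℓ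
    by_cases h : ℓ ∈ L
    · exact le_trans (Nat.le_add_left _ _) (hxy ℓ h)
    · exact hy ℓ h
  set M : ℕ := ∏ ℓ ∈ L'ᶜ, z ℓ with hM
  have hsplit : ∀ f : Fin m → ℕ, ∏ ℓ, f ℓ = (∏ ℓ ∈ L', f ℓ) * ∏ ℓ ∈ L'ᶜ, f ℓ := by
    intro f
    rw [← Finset.prod_mul_prod_compl L' f]
  have hp' : p ^ δ ≤ (∏ ℓ ∈ L', x ℓ) * M := by
    refine hp.trans ?_
    rw [hsplit x]
    exact Nat.mul_le_mul_left _ (Finset.prod_le_prod (fun _ _ => Nat.zero_le _)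
      (fun ℓ _ => hx ℓ))
  have hq' : q ^ δ ≤ (∏ ℓ ∈ L', y ℓ) * M := by
    refine hq.trans ?_
    rw [hsplit y]
    exact Nat.mul_le_mul_left _ (Finset.prod_le_prod (fun _ _ => Nat.zero_le _)
      (fun ℓ _ => hy' ℓ))
  have := cfgs_nat_mink L' hδ hL'card x y p q M hp' hq'
  refine this.trans ?_
  rw [hsplit z]
  exact Nat.mul_le_mul_right _ (Finset.prod_le_prod (fun _ _ => Nat.zero_le _)
    (fun ℓ hℓ => hxy ℓ (hL'sub hℓ)))

lemma cfgs_main {α : Type*} [DecidableEq α] {m δ : ℕ} (hδ : 1 ≤ δ) (P : Fin m → Finset α)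
    (A : Finset α) (hcov : ∀ u ∈ A, δ ≤ (Finset.univ.filter (fun ℓ => u ∈ P ℓ)).card)
    (F : Finset (Finset α)) (hF : ∀ S ∈ F, S ⊆ A) :
    F.card ^ δ ≤ ∏ ℓ : Fin m, (F.image (fun S => S ∩ P ℓ)).card := by
  induction A using Finset.induction_on generalizing F with
  | empty =>
    -- F ⊆ {∅}
    rcases Finset.eq_empty_or_nonempty F with rfl | hne
    · simp [zero_pow (by omega : δ ≠ 0)]
    · have hcard : F.card = 1 := by
        have : F = {∅} := by
          apply Finset.eq_singleton_iff_nonempty_unique_mem.mpr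
          exact ⟨hne, fun S hS => Finset.subset_empty.mp (hF S hS)⟩
        rw [this]; rfl
      rw [hcard, one_pow]
      refine Finset.one_le_prod' fun ℓ _ => ?_
      rw [Nat.one_le_iff_ne_zero, ← Nat.pos_iff_ne_zero, Finset.card_pos]
      exact hne.image _
  | @insert a s ha ih =>
    classical
    set F₀ : Finset (Finset α) := F.filter (fun S => a ∉ S) with hF₀
    set F₁ : Finset (Finset α) := F.filter (fun S => a ∈ S) with hF₁
    set G₁ : Finset (Finset α) := F₁.image (fun S => S.erase a) with hG₁
    have hF₀sub : ∀ S ∈ F₀, S ⊆ s := by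
      intro S hS
      rw [hF₀, Finset.mem_filter] at hS
      intro u hu
      rcases Finset.mem_insert.mp (hF S hS.1 hu) with rfl | h
      · exact absurd hu hS.2
      · exact h
    have hG₁sub : ∀ S ∈ G₁, S ⊆ s := by
      intro S hS
      rw [hG₁] at hS
      obtain ⟨T, hT, rfl⟩ := Finset.mem_image.mp hS
      rw [hF₁, Finset.mem_filter] at hT
      intro u hu
      have hu' := Finset.mem_erase.mp hu
      rcases Finset.mem_insert.mp (hF T hT.1 hu'.2) with rfl | h
      · exact absurd rfl hu'.1
      · exact h
    have hcov' : ∀ u ∈ s, δ ≤ (Finset.univ.filter (fun ℓ => u ∈ P ℓ)).card :=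
      fun u hu => hcov u (Finset.mem_insert_of_mem hu)
    have ih₀ := ih hcov' F₀ hF₀sub
    have ih₁ := ih hcov' G₁ hG₁sub
    -- cardinalities
    have hsum : F.card = F₀.card + F₁.card := by
      have h := Finset.card_filter_add_card_filter_not (s := F) (p := fun S => a ∈ S)
      rw [hF₀, hF₁]
      omega
    have hG₁card : G₁.card = F₁.card := by
      rw [hG₁]
      apply Finset.card_image_of_injOn
      intro S hS T hT hST
      simp only [Finset.mem_coe, hF₁, Finset.mem_filter] at hS hT
      have : insert a (S.erase a) = insert a (T.erase a) := by
        beta_reduce at hST; rw [hST]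
      rwa [Finset.insert_erase hS.2, Finset.insert_erase hT.2] at this
    -- set up x, y, z
    set x : Fin m → ℕ := fun ℓ => (F₀.image (fun S => S ∩ P ℓ)).card with hx'
    set y : Fin m → ℕ := fun ℓ => (G₁.image (fun S => S ∩ P ℓ)).card with hy'
    set z : Fin m → ℕ := fun ℓ => (F.image (fun S => S ∩ P ℓ)).card with hz'
    set L : Finset (Fin m) := Finset.univ.filter (fun ℓ => a ∈ P ℓ) with hL'
    have hLcard : δ ≤ L.card := hcov a (Finset.mem_insert_self a s)
    have hxz : ∀ ℓ, x ℓ ≤ z ℓ := by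
      intro ℓ
      exact Finset.card_le_card (Finset.image_subset_image (Finset.filter_subset _ _))
    have hyz : ∀ ℓ ∉ L, y ℓ ≤ z ℓ := by
      intro ℓ hℓ
      rw [hL', Finset.mem_filter] at hℓ
      have haP : a ∉ P ℓ := fun h => hℓ ⟨Finset.mem_univ _, h⟩
      have : G₁.image (fun S => S ∩ P ℓ) ⊆ F.image (fun S => S ∩ P ℓ) := by
        intro T hT
        obtain ⟨S, hS, rfl⟩ := Finset.mem_image.mp hT
        obtain ⟨S', hS', rfl⟩ := Finset.mem_image.mp hS
        refine Finset.mem_image.mpr ⟨S', (Finset.mem_filter.mp hS').1, ?_⟩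
        ext u
        simp only [Finset.mem_inter, Finset.mem_erase]
        constructor
        · rintro ⟨hu, hP⟩; exact ⟨⟨fun h => haP (h ▸ hP), hu⟩, hP⟩
        · rintro ⟨⟨_, hu⟩, hP⟩; exact ⟨hu, hP⟩
      exact Finset.card_le_card this
    have hxyz : ∀ ℓ ∈ L, x ℓ + y ℓ ≤ z ℓ := by
      intro ℓ hℓ
      rw [hL', Finset.mem_filter] at hℓ
      have haP : a ∈ P ℓ := hℓ.2
      -- z ℓ = x ℓ + (F₁.image t).card with F₁ traces containing a
      have himg : F.image (fun S => S ∩ P ℓ)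
          = F₀.image (fun S => S ∩ P ℓ) ∪ F₁.image (fun S => S ∩ P ℓ) := by
        rw [← Finset.image_union]
        congr 1
        rw [hF₀, hF₁, ← Finset.filter_or]
        rw [Finset.filter_true_of_mem]
        intro S _; tauto
      have hdisj : Disjoint (F₀.image (fun S => S ∩ P ℓ)) (F₁.image (fun S => S ∩ P ℓ)) := by
        rw [Finset.disjoint_left]
        intro T hT0 hT1
        obtain ⟨S, hS, rfl⟩ := Finset.mem_image.mp hT0
        obtain ⟨S', hS', hSS'⟩ := Finset.mem_image.mp hT1
        have h0 : a ∉ S := (Finset.mem_filter.mp hS).2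
        have h1 : a ∈ S' := (Finset.mem_filter.mp hS').2
        have : a ∈ S ∩ P ℓ := hSS' ▸ Finset.mem_inter.mpr ⟨h1, haP⟩
        exact h0 (Finset.mem_inter.mp this).1
      have hcard1 : (F₁.image (fun S => S ∩ P ℓ)).card
          = (G₁.image (fun S => S ∩ P ℓ)).card := by
        have heq : G₁.image (fun S => S ∩ P ℓ)
            = (F₁.image (fun S => S ∩ P ℓ)).image (fun T => T.erase a) := by
          rw [hG₁, Finset.image_image, Finset.image_image]
          apply Finset.image_congr
          intro S _
          show S.erase a ∩ P ℓ = (S ∩ P ℓ).erase a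
          ext u
          simp only [Finset.mem_inter, Finset.mem_erase]
          tauto
        rw [heq]
        refine (Finset.card_image_of_injOn ?_).symm
        intro T hT T' hT' hTT'
        simp only [Finset.coe_image, Set.mem_image, Finset.mem_coe] at hT hT'
        obtain ⟨S, hS, rfl⟩ := hT
        obtain ⟨S', hS', rfl⟩ := hT'
        rw [hF₁, Finset.mem_filter] at hS hS'
        have h1 : a ∈ S ∩ P ℓ := Finset.mem_inter.mpr ⟨hS.2, haP⟩
        have h1' : a ∈ S' ∩ P ℓ := Finset.mem_inter.mpr ⟨hS'.2, haP⟩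
        have h2 : insert a ((S ∩ P ℓ).erase a) = insert a ((S' ∩ P ℓ).erase a) := by
          beta_reduce at hTT'; rw [hTT']
        rwa [Finset.insert_erase h1, Finset.insert_erase h1'] at h2
      simp only [hx', hy', hz']
      rw [himg, Finset.card_union_of_disjoint hdisj]
      omega
    have := cfgs_combine (by omega) L hLcard x y z hxz hyz hxyz F₀.card G₁.card ih₀ ih₁
    rw [hsum, ← hG₁card]
    exact this

theorem chung_frankl_graham_shearer {α : Type*} [Fintype α] [DecidableEq α]
    (m δ : ℕ) (hδ : 1 ≤ δ) (P : Fin m → Finset α)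
    (hcov : ∀ u : α, δ ≤ (Finset.univ.filter (fun ℓ => u ∈ P ℓ)).card)
    (F : Finset (Finset α)) :
    F.card ^ δ ≤ ∏ ℓ : Fin m, (F.image (fun S => S ∩ P ℓ)).card := by
  exact cfgs_main hδ P Finset.univ (fun u _ => hcov u) F (fun S _ => Finset.subset_univ S)
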